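/- Let R be a Noetherian regular domain of prime characteristic p with flat Frobenius, f ∈ R nonzero, and r, e positive integers. If I ⊆ R is a nonzero ideal with I ⊆ (I^{[p^e]} : f^r), then f belongs to the radical of I. -/

import Mathlib

/-- The `q`-th Frobenius power `I^{[q]}` of an ideal: the ideal generated by `q`-th powers
of elements of `I`. -/
def frobPow {R : Type*} [CommRing R] (I : Ideal R) (q : ℕ) : Ideal R :=
  Ideal.span ((fun x => x ^ q) '' (I : Set R))

lemma frobPow_le_pow {R : Type*} [CommRing R] (I : Ideal R) (m : ℕ) :
    frobPow I m ≤ I ^ m := by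
  rw [frobPow, Ideal.span_le]
  rintro _ ⟨x, hx, rfl⟩
  exact Ideal.pow_mem_pow hx m

lemma le_frobPow_one {R : Type*} [CommRing R] (I : Ideal R) : I ≤ frobPow I 1 := by
  intro x hx
  exact Ideal.subset_span ⟨x, hx, pow_one x⟩

lemma pow_mem_frobPow_mul {R : Type*} [CommRing R] (p : ℕ) [hp : Fact p.Prime] [CharP R p]
    (I : Ideal R) (m e : ℕ) {z : R} (hz : z ∈ frobPow I m) :
    z ^ p ^ e ∈ frobPow I (m * p ^ e) := by
  induction hz using Submodule.span_induction with
  | mem x hx =>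
      obtain ⟨y, hy, rfl⟩ := hx
      rw [← pow_mul]
      exact Ideal.subset_span ⟨y, hy, rfl⟩
  | zero =>
      rw [zero_pow (pow_ne_zero _ (hp.out.ne_zero))]
      exact (frobPow I (m * p ^ e)).zero_mem
  | add a b _ _ ha hb =>
      rw [add_pow_char_pow]
      exact Ideal.add_mem _ ha hb
  | smul c x _ hx =>
      rw [smul_eq_mul, mul_pow]
      exact Ideal.mul_mem_left _ _ hx

/-- In a Noetherian regular domain of characteristic `p` with flat Frobenius, if a nonzero
ideal `I` satisfies `I ⊆ (I^{[p^e]} : f^r)`, then `f` is in the radical of `I`. -/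
theorem stmt2 {R : Type*} [CommRing R] [IsDomain R] [IsNoetherianRing R]
    (p : ℕ) [Fact p.Prime] [CharP R p] [ExpChar R p]
    (hflat : @Module.Flat R R _ _ (Module.compHom R (frobenius R p)))
    (f : R) (hf : f ≠ 0) (r e : ℕ) (hr : 0 < r) (he : 0 < e)
    (I : Ideal R) (hI : I ≠ ⊥)
    (h : I ≤ (frobPow I (p ^ e)).colon (Ideal.span {f ^ r})) :
    f ∈ I.radical := by
  have hq1 : 1 < p ^ e := Nat.one_lt_pow he.ne' (Fact.out : p.Prime).one_lt
  -- the exponent sequence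
  let c : ℕ → ℕ := fun n => Nat.rec 0 (fun _ cn => p ^ e * cn + r) n
  -- key containment: f ^ c n * x ∈ frobPow I ((p ^ e) ^ n) for x ∈ I
  have key : ∀ n, ∀ x ∈ I, f ^ c n * x ∈ frobPow I ((p ^ e) ^ n) := by
    intro n
    induction n with
    | zero =>
        intro x hx
        rw [show c 0 = 0 from rfl]
        simp only [pow_zero, one_mul]
        exact le_frobPow_one I hx
    | succ n ih =>
        intro x hx
        have hfr : f ^ r * x ∈ frobPow I (p ^ e) := by
          rw [mul_comm]; exact Ideal.mem_colon_span_singleton.mp (h hx)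
        have hB : ∀ z ∈ frobPow I (p ^ e),
            f ^ (p ^ e * c n) * z ∈ frobPow I ((p ^ e) ^ (n + 1)) := by
          intro z hz
          induction hz using Submodule.span_induction with
          | mem y hy =>
              obtain ⟨y, hyI, rfl⟩ := hy
              have h0 := pow_mem_frobPow_mul p I ((p ^ e) ^ n) e (ih y hyI)
              rw [← pow_succ, mul_pow, ← pow_mul f (c n) (p ^ e),
                mul_comm (c n) (p ^ e)] at h0
              simpa using h0
          | zero => simp only [mul_zero]; exact (frobPow I ((p ^ e) ^ (n + 1))).zero_mem
          | add a b _ _ ha hb =>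
              rw [mul_add]; exact Ideal.add_mem _ ha hb
          | smul d z _ hz' =>
              rw [smul_eq_mul, mul_comm d z, ← mul_assoc]
              exact Ideal.mul_mem_right _ _ hz'
        have h2 := hB _ hfr
        rw [← mul_assoc, ← pow_add] at h2
        exact h2
  -- suppose f is not in the radical
  by_contra hfrad
  rw [Ideal.radical_eq_sInf, Ideal.mem_sInf] at hfrad
  push_neg at hfrad
  obtain ⟨P, ⟨hIP, hPprime⟩, hfP⟩ := hfrad
  haveI := hPprime
  obtain ⟨a, haI, ha0⟩ := I.ne_bot_iff.mp hI
  -- pass to the localization at P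
  let Rp := Localization.AtPrime P
  haveI : IsNoetherianRing Rp :=
    IsLocalization.isNoetherianRing P.primeCompl Rp inferInstance
  let φ := algebraMap R Rp
  have hu : IsUnit (φ f) := IsLocalization.map_units Rp (⟨f, hfP⟩ : P.primeCompl)
  have hPmap : P.map φ = IsLocalRing.maximalIdeal Rp :=
    Localization.AtPrime.map_eq_maximalIdeal
  have hmem : ∀ n, φ a ∈ (IsLocalRing.maximalIdeal Rp) ^ n := by
    intro n
    have h1 : f ^ c n * a ∈ P ^ ((p ^ e) ^ n) :=
      Ideal.pow_right_mono hIP _ (frobPow_le_pow I ((p ^ e) ^ n) (key n a haI))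
    have h2 : φ (f ^ c n * a) ∈ (P.map φ) ^ ((p ^ e) ^ n) := by
      rw [← Ideal.map_pow]
      exact Ideal.mem_map_of_mem φ h1
    rw [hPmap] at h2
    have h3 : φ a ∈ (IsLocalRing.maximalIdeal Rp) ^ ((p ^ e) ^ n) := by
      rw [map_mul, map_pow] at h2
      exact (Ideal.unit_mul_mem_iff_mem _ (hu.pow _)).mp h2
    exact Ideal.pow_le_pow_right (le_of_lt (Nat.lt_pow_self (n := n) hq1)) h3
  have hbot : (⨅ n : ℕ, (IsLocalRing.maximalIdeal Rp) ^ n) = ⊥ :=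
    Ideal.iInf_pow_eq_bot_of_isLocalRing _ (IsLocalRing.maximalIdeal.isMaximal Rp).ne_top
  have hφa : φ a = 0 := by
    have h4 := Ideal.mem_iInf.mpr hmem
    rw [hbot] at h4
    simpa using h4
  have : a = 0 := by
    have hinj : Function.Injective φ :=
      IsLocalization.injective Rp P.primeCompl_le_nonZeroDivisors
    exact hinj (by simpa using hφa)
  exact ha0 this
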